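/- Let X, Y be independent nonnegative random variables with Y > 0 a.s. Then E[ln(1 + X/Y)] ≤ ∫₀^∞ (1/z)·(1 − e^{−z E[X]})·E[e^{−zY}] dz. -/

import Mathlib

open Real MeasureTheory ProbabilityTheory Set



lemma lint_exp_Ioi {t : ℝ} (ht : 0 < t) :
    ∫⁻ z in Set.Ioi (0:ℝ), ENNReal.ofReal (Real.exp (-(t*z))) = ENNReal.ofReal (1/t) := by
  have hint : IntegrableOn (fun z : ℝ => Real.exp (-(t*z))) (Set.Ioi 0) := by
    simpa [neg_mul] using exp_neg_integrableOn_Ioi 0 ht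
  rw [← MeasureTheory.ofReal_integral_eq_lintegral_ofReal hint
    (Filter.Eventually.of_forall fun z => (Real.exp_pos _).le)]
  congr 1
  have := MeasureTheory.integral_comp_mul_left_Ioi (fun u => Real.exp (-u)) 0 ht
  simp only [mul_zero] at this
  rw [this, integral_exp_neg_Ioi 0]
  simp [smul_eq_mul, one_div]

lemma exp_int_Ioc {z a b : ℝ} (hz : 0 < z) (hab : a ≤ b) :
    ∫ t in Set.Ioc a b, Real.exp (-(z*t)) = (1/z) * (Real.exp (-(z*a)) - Real.exp (-(z*b))) := by
  rw [← intervalIntegral.integral_of_le hab]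
  have h1 : ∀ t : ℝ, Real.exp (-(z*t)) = Real.exp ((-z)*t) := by intro t; ring_nf
  simp only [h1]
  rw [intervalIntegral.integral_comp_mul_left (fun u => Real.exp u) (neg_ne_zero.mpr hz.ne')]
  rw [integral_exp]
  have hz' : z ≠ 0 := hz.ne'
  field_simp
  rw [smul_eq_mul, show z * (-(1/z) * (rexp (-(z * b)) - rexp (-(z * a)))) = -(z*(1/z)) * (rexp (-(z * b)) - rexp (-(z * a))) by ring, mul_one_div_cancel hz']
  ring

lemma frullani_log {a c : ℝ} (ha : 0 < a) (hc : 0 ≤ c) :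
    ∫⁻ z in Set.Ioi (0:ℝ),
        ENNReal.ofReal ((1/z) * (Real.exp (-(z*a)) - Real.exp (-(z*(a+c)))))
      = ENNReal.ofReal (Real.log (1 + c/a)) := by
  set b := a + c with hb
  have hab : a ≤ b := by simp [hb, hc]
  have hcont : ∀ z : ℝ, IntegrableOn (fun t => Real.exp (-(z*t))) (Set.Ioc a b) := by
    intro z
    exact (Continuous.integrableOn_Ioc (by continuity))
  -- step 1: rewrite integrand as inner lintegral
  have step1 : ∀ z ∈ Set.Ioi (0:ℝ),
      ENNReal.ofReal ((1/z) * (Real.exp (-(z*a)) - Real.exp (-(z*b))))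
        = ∫⁻ t in Set.Ioc a b, ENNReal.ofReal (Real.exp (-(z*t))) := by
    intro z hz
    rw [← exp_int_Ioc hz hab,
      MeasureTheory.ofReal_integral_eq_lintegral_ofReal (hcont z)
        (Filter.Eventually.of_forall fun t => (Real.exp_pos _).le)]
  rw [setLIntegral_congr_fun measurableSet_Ioi step1]
  -- step 2: swap
  have hmeas : AEMeasurable (fun p : ℝ × ℝ => ENNReal.ofReal (Real.exp (-(p.1 * p.2))))
      ((volume.restrict (Set.Ioi (0:ℝ))).prod (volume.restrict (Set.Ioc a b))) := by
    exact (ENNReal.measurable_ofReal.comp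
      (Real.measurable_exp.comp ((measurable_fst.mul measurable_snd).neg))).aemeasurable
  rw [MeasureTheory.lintegral_lintegral_swap hmeas]
  -- step 3: inner integral
  have step3 : ∀ t ∈ Set.Ioc a b,
      (∫⁻ z in Set.Ioi (0:ℝ), ENNReal.ofReal (Real.exp (-(z * t)))) = ENNReal.ofReal (1/t) := by
    intro t ht
    have ht' : 0 < t := lt_trans ha ht.1
    rw [← lint_exp_Ioi ht']
    simp [mul_comm]
  rw [setLIntegral_congr_fun measurableSet_Ioc step3]
  -- step 4: compute
  have hInt : IntegrableOn (fun t : ℝ => 1/t) (Set.Ioc a b) := by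
    apply (ContinuousOn.integrableOn_Icc ?_).mono_set Set.Ioc_subset_Icc_self
    exact ContinuousOn.div continuousOn_const continuousOn_id
      (fun t ht => (lt_of_lt_of_le ha ht.1).ne')
  rw [← MeasureTheory.ofReal_integral_eq_lintegral_ofReal hInt
    (by filter_upwards [ae_restrict_mem measurableSet_Ioc] with t ht
        exact le_of_lt (one_div_pos.mpr (lt_trans ha ht.1)))]
  congr 1
  rw [← intervalIntegral.integral_of_le hab, integral_one_div]
  · congr 1
    field_simp
    exact hb
  · intro h
    rw [Set.uIcc_of_le hab] at h
    exact absurd h.1 (by linarith)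

section
variable {Ω : Type*} [MeasurableSpace Ω] {μ : Measure Ω} [IsProbabilityMeasure μ]

lemma exp_integrable {W : Ω → ℝ} (hW : Measurable W) (hWpos : ∀ᵐ ω ∂μ, 0 ≤ W ω)
    {z : ℝ} (hz : 0 ≤ z) : Integrable (fun ω => Real.exp (-(z * W ω))) μ := by
  refine Integrable.mono' (integrable_const 1)
    ((Real.measurable_exp.comp ((measurable_const.mul hW).neg)).aestronglyMeasurable) ?_
  filter_upwards [hWpos] with ω hω
  rw [Real.norm_eq_abs, abs_of_pos (Real.exp_pos _)]
  exact Real.exp_le_one_iff.mpr (neg_nonpos.mpr (mul_nonneg hz hω))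

lemma exp_integral_le_one {W : Ω → ℝ} (hW : Measurable W) (hWpos : ∀ᵐ ω ∂μ, 0 ≤ W ω)
    {z : ℝ} (hz : 0 ≤ z) : (∫ ω, Real.exp (-(z * W ω)) ∂μ) ≤ 1 := by
  calc (∫ ω, Real.exp (-(z * W ω)) ∂μ) ≤ ∫ _ω, (1:ℝ) ∂μ := by
        refine integral_mono_ae (exp_integrable hW hWpos hz) (integrable_const 1) ?_
        filter_upwards [hWpos] with ω hω
        exact Real.exp_le_one_iff.mpr (neg_nonpos.mpr (mul_nonneg hz hω))
    _ = 1 := by simp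

lemma jensen_exp {W : Ω → ℝ} (hW : Measurable W) (hWpos : ∀ ω, 0 ≤ W ω)
    (hWint : Integrable W μ) {z : ℝ} (hz : 0 ≤ z) :
    Real.exp (-(z * ∫ ω, W ω ∂μ)) ≤ ∫ ω, Real.exp (-(z * W ω)) ∂μ := by
  have hconv : ConvexOn ℝ Set.univ (fun t : ℝ => Real.exp (-(z * t))) := by
    refine ⟨convex_univ, fun x _ y _ a b ha hb hab => ?_⟩
    have := convexOn_exp.2 (Set.mem_univ (-(z*x))) (Set.mem_univ (-(z*y))) ha hb hab
    simp only [smul_eq_mul] at this ⊢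
    calc Real.exp (-(z * (a * x + b * y))) = Real.exp (a * -(z*x) + b * -(z*y)) := by ring_nf
      _ ≤ a * Real.exp (-(z*x)) + b * Real.exp (-(z*y)) := this
  have := hconv.map_average_le (Continuous.continuousOn (by continuity)) isClosed_univ
    (Filter.Eventually.of_forall fun ω => Set.mem_univ (W ω)) hWint
    (exp_integrable hW (.of_forall hWpos) hz)
  simpa [average_eq_integral] using this

end

theorem ergodic_se_upper_bound
    {Ω : Type*} [MeasureSpace Ω] (μ : Measure Ω) [IsProbabilityMeasure μ]
    (X Y : Ω → ℝ) (hX : Measurable X) (hY : Measurable Y)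
    (hindep : IndepFun X Y μ)
    (hXpos : ∀ ω, 0 ≤ X ω) (hYpos : ∀ᵐ ω ∂μ, 0 < Y ω)
    (hXint : Integrable X μ)
    (hint : Integrable (fun ω => Real.log (1 + X ω / Y ω)) μ) :
    (∫ ω, Real.log (1 + X ω / Y ω) ∂μ) ≤
      ∫ z in Set.Ioi (0 : ℝ),
        (1 / z) * (1 - Real.exp (-z * ∫ ω, X ω ∂μ)) * ∫ ω, Real.exp (-z * Y ω) ∂μ := by
  simp only [neg_mul]
  set EX : ℝ := ∫ ω, X ω ∂μ with hEX
  have hEXnn : 0 ≤ EX := integral_nonneg hXpos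
  rcases eq_or_lt_of_le hEXnn with hEX0 | hEXpos
  · -- degenerate case: X = 0 a.e.
    have hX0 : ∀ᵐ ω ∂μ, X ω = 0 := by
      have := (integral_eq_zero_iff_of_nonneg hXpos hXint).mp hEX0.symm
      filter_upwards [this] with ω hω using hω
    have hL : (∫ ω, Real.log (1 + X ω / Y ω) ∂μ) = 0 := by
      rw [← integral_zero Ω ℝ (μ := μ)]
      refine integral_congr_ae ?_
      filter_upwards [hX0] with ω hω
      simp [hω]
    have hR : ∀ z : ℝ, (1 / z) * (1 - Real.exp (-(z * EX))) * ∫ ω, Real.exp (-(z * Y ω)) ∂μ = 0 := by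
      intro z; rw [← hEX0]; simp
    rw [hL]
    simp only [hR]
    simp
  · -- main case
    have hYnn : ∀ᵐ ω ∂μ, 0 ≤ Y ω := by filter_upwards [hYpos] with ω h using h.le
    set LY : ℝ → ℝ := fun z => ∫ ω, Real.exp (-(z * Y ω)) ∂μ with hLY
    set LX : ℝ → ℝ := fun z => ∫ ω, Real.exp (-(z * X ω)) ∂μ with hLX
    set F : ℝ → ℝ := fun z => (1/z) * (1 - LX z) * LY z with hF
    set G : ℝ → ℝ := fun z => (1/z) * (1 - Real.exp (-(z * EX))) * LY z with hG
    have hLYsm : StronglyMeasurable LY := by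
      have : StronglyMeasurable (fun p : ℝ × Ω => Real.exp (-(p.1 * Y p.2))) :=
        (Real.measurable_exp.comp ((measurable_fst.mul (hY.comp measurable_snd)).neg)).stronglyMeasurable
      exact this.integral_prod_right'
    have hLYnn : ∀ z : ℝ, 0 ≤ LY z := fun z => integral_nonneg fun ω => (Real.exp_pos _).le
    have hLYle : ∀ z : ℝ, 0 ≤ z → LY z ≤ 1 := fun z hz => exp_integral_le_one hY hYnn hz
    have hfnn : 0 ≤ᵐ[μ] fun ω => Real.log (1 + X ω / Y ω) := by
      filter_upwards [hYpos] with ω h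
      exact Real.log_nonneg (by nlinarith [div_nonneg (hXpos ω) h.le])
    set A : ENNReal := ∫⁻ ω, ENNReal.ofReal (Real.log (1 + X ω / Y ω)) ∂μ with hA
    have hLHS : (∫ ω, Real.log (1 + X ω / Y ω) ∂μ) = A.toReal :=
      integral_eq_lintegral_of_nonneg_ae hfnn hint.1
    have hA_top : A ≠ ⊤ := by
      refine ne_of_lt (lt_of_le_of_lt ?_ hint.2)
      refine lintegral_mono fun ω => ?_
      rw [← ofReal_norm]
      exact ENNReal.ofReal_le_ofReal (le_abs_self _)
    have hswap : A = ∫⁻ z in Set.Ioi (0:ℝ), ∫⁻ ω,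
        ENNReal.ofReal ((1/z) * (Real.exp (-(z * Y ω)) - Real.exp (-(z * (Y ω + X ω))))) ∂μ := by
      have h1 : ∀ᵐ ω ∂μ, ENNReal.ofReal (Real.log (1 + X ω / Y ω))
          = ∫⁻ z in Set.Ioi (0:ℝ),
              ENNReal.ofReal ((1/z) * (Real.exp (-(z * Y ω)) - Real.exp (-(z * (Y ω + X ω))))) := by
        filter_upwards [hYpos] with ω hYω
        exact (frullani_log hYω (hXpos ω)).symm
      rw [hA, lintegral_congr_ae h1]
      refine lintegral_lintegral_swap ?_
      refine Measurable.aemeasurable ?_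
      refine ENNReal.measurable_ofReal.comp ?_
      refine Measurable.mul (measurable_const.div measurable_snd) ?_
      refine Measurable.sub ?_ ?_
      · exact Real.measurable_exp.comp ((measurable_snd.mul (hY.comp measurable_fst)).neg)
      · exact Real.measurable_exp.comp
          ((measurable_snd.mul ((hY.comp measurable_fst).add (hX.comp measurable_fst))).neg)
    have hinner : ∀ z ∈ Set.Ioi (0:ℝ), (∫⁻ ω,
        ENNReal.ofReal ((1/z) * (Real.exp (-(z * Y ω)) - Real.exp (-(z * (Y ω + X ω))))) ∂μ)
          = ENNReal.ofReal (F z) := by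
      intro z hz
      have hz0 : (0:ℝ) < z := hz
      have hIY : Integrable (fun ω => Real.exp (-(z * Y ω))) μ := exp_integrable hY hYnn hz0.le
      have hIXY : Integrable (fun ω => Real.exp (-(z * (Y ω + X ω)))) μ :=
        exp_integrable (hY.add hX) (by filter_upwards [hYnn] with ω h using add_nonneg h (hXpos ω))
          hz0.le
      have hIg : Integrable
          (fun ω => (1/z) * (Real.exp (-(z * Y ω)) - Real.exp (-(z * (Y ω + X ω))))) μ :=
        (hIY.sub hIXY).const_mul _
      have hgnn : 0 ≤ᵐ[μ] fun ω => (1/z) * (Real.exp (-(z * Y ω)) - Real.exp (-(z * (Y ω + X ω)))) := by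
        refine Filter.Eventually.of_forall fun ω => ?_
        have : Real.exp (-(z * (Y ω + X ω))) ≤ Real.exp (-(z * Y ω)) := by
          apply Real.exp_le_exp.mpr
          nlinarith [hXpos ω]
        have h1z : (0:ℝ) ≤ 1/z := by positivity
        exact mul_nonneg h1z (sub_nonneg.mpr this)
      rw [← MeasureTheory.ofReal_integral_eq_lintegral_ofReal hIg hgnn]
      congr 1
      rw [MeasureTheory.integral_const_mul, integral_sub hIY hIXY]
      have hprod : (∫ ω, Real.exp (-(z * (Y ω + X ω))) ∂μ)
          = LX z * LY z := by
        have hcongr : (fun ω => Real.exp (-(z * (Y ω + X ω))))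
            = fun ω => Real.exp (-(z * X ω)) * Real.exp (-(z * Y ω)) := by
          funext ω
          rw [← Real.exp_add]
          ring_nf
        rw [hcongr]
        have hindep' : IndepFun (fun ω => Real.exp (-(z * X ω))) (fun ω => Real.exp (-(z * Y ω))) μ :=
          hindep.comp (Real.measurable_exp.comp (measurable_const.mul measurable_id).neg)
            (Real.measurable_exp.comp (measurable_const.mul measurable_id).neg)
        exact hindep'.integral_fun_mul_eq_mul_integral (exp_integrable hX (.of_forall hXpos) hz0.le).1 hIY.1
      rw [hprod]
      simp only [hF]
      ring
    have hB : A = ∫⁻ z in Set.Ioi (0:ℝ), ENNReal.ofReal (F z) := by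
      rw [hswap, setLIntegral_congr_fun measurableSet_Ioi hinner]
    have hFnn : ∀ z ∈ Set.Ioi (0:ℝ), 0 ≤ F z := by
      intro z hz
      have hz0 : (0:ℝ) < z := hz
      have h1 : LX z ≤ 1 := exp_integral_le_one hX (.of_forall hXpos) (le_of_lt hz)
      exact mul_nonneg (mul_nonneg (by positivity) (by linarith)) (hLYnn z)
    have hFG : ∀ z ∈ Set.Ioi (0:ℝ), F z ≤ G z := by
      intro z hz
      have hz0 : (0:ℝ) < z := hz
      have hj : Real.exp (-(z * EX)) ≤ LX z := jensen_exp hX hXpos hXint (le_of_lt hz)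
      exact mul_le_mul_of_nonneg_right
        (mul_le_mul_of_nonneg_left (by linarith) (by positivity)) (hLYnn z)
    have hBC : (∫⁻ z in Set.Ioi (0:ℝ), ENNReal.ofReal (F z))
        ≤ ∫⁻ z in Set.Ioi (0:ℝ), ENNReal.ofReal (G z) := by
      refine lintegral_mono_ae ?_
      filter_upwards [ae_restrict_mem measurableSet_Ioi] with z hz
      exact ENNReal.ofReal_le_ofReal (hFG z hz)
    have hGnn : ∀ z ∈ Set.Ioi (0:ℝ), 0 ≤ G z := by
      intro z hz
      have hz0 : (0:ℝ) < z := hz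
      have : Real.exp (-(z * EX)) ≤ 1 :=
        Real.exp_le_one_iff.mpr (neg_nonpos.mpr (mul_nonneg (le_of_lt hz) hEXnn))
      exact mul_nonneg (mul_nonneg (by positivity) (by linarith)) (hLYnn z)
    have hGm : AEStronglyMeasurable G (volume.restrict (Set.Ioi (0:ℝ))) := by
      refine StronglyMeasurable.aestronglyMeasurable ?_
      exact (((measurable_const.div measurable_id).mul
        ((measurable_const.sub (Real.measurable_exp.comp (measurable_id.mul measurable_const).neg))
          )).stronglyMeasurable.mul hLYsm)
    have hRHS : (∫ z in Set.Ioi (0:ℝ), G z)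
        = (∫⁻ z in Set.Ioi (0:ℝ), ENNReal.ofReal (G z)).toReal := by
      refine integral_eq_lintegral_of_nonneg_ae ?_ hGm
      filter_upwards [ae_restrict_mem measurableSet_Ioi] with z hz using hGnn z hz
    have hC_top : (∫⁻ z in Set.Ioi (0:ℝ), ENNReal.ofReal (G z)) ≠ ⊤ := by
      obtain ⟨ε, hε, hpε⟩ : ∃ ε : ℝ, 0 < ε ∧ 0 < (μ {ω | ε ≤ X ω}).toReal := by
        by_contra hcon
        push_neg at hcon
        have hnull : ∀ ε : ℝ, 0 < ε → μ {ω | ε ≤ X ω} = 0 := by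
          intro ε' hε'
          have h1 := hcon ε' hε'
          have h2 := le_antisymm h1 ENNReal.toReal_nonneg
          rcases (ENNReal.toReal_eq_zero_iff _).mp h2 with h | h
          · exact h
          · exact absurd h (measure_ne_top μ _)
        have hU0 : μ (⋃ n : ℕ, {ω | 1/((n:ℝ)+1) ≤ X ω}) = 0 :=
          measure_iUnion_null fun n => hnull _ (by positivity)
        have hU : μ {ω | 0 < X ω} = 0 := by
          refine measure_mono_null ?_ hU0
          intro ω hω
          have hω' : (0:ℝ) < X ω := hω
          obtain ⟨n, hn⟩ := exists_nat_one_div_lt hω'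
          exact Set.mem_iUnion.mpr ⟨n, hn.le⟩
        have hX0 : ∀ᵐ ω ∂μ, X ω = 0 := by
          rw [ae_iff]
          refine measure_mono_null ?_ hU
          intro ω hω
          exact lt_of_le_of_ne (hXpos ω) (Ne.symm hω)
        have hEXz : EX = 0 := by
          rw [hEX]
          exact integral_eq_zero_of_ae hX0
        linarith
      set p : ℝ := (μ {ω | ε ≤ X ω}).toReal with hp
      set z₀ : ℝ := 1/ε with hz₀
      have hz₀pos : 0 < z₀ := by positivity
      have hAs : MeasurableSet {ω | ε ≤ X ω} := hX measurableSet_Ici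
      have hkey : ∀ z ∈ Set.Ioi z₀, p/2 ≤ 1 - LX z := by
        intro z hz
        have hzz : z₀ < z := hz
        have hz0 : 0 < z := lt_trans hz₀pos hzz
        have hIe : Integrable (fun ω => Real.exp (-(z * X ω))) μ :=
          exp_integrable hX (.of_forall hXpos) hz0.le
        have hI1 : Integrable (fun ω => 1 - Real.exp (-(z * X ω))) μ := (integrable_const 1).sub hIe
        have e1 : 1 - LX z = ∫ ω, (1 - Real.exp (-(z * X ω))) ∂μ := by
          rw [integral_sub (integrable_const 1) hIe]
          simp [hLX]
        have e2 : ∫ ω in {ω | ε ≤ X ω}, (1 - Real.exp (-(z * X ω))) ∂μ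
            ≤ ∫ ω, (1 - Real.exp (-(z * X ω))) ∂μ := by
          refine setIntegral_le_integral hI1 ?_
          refine Filter.Eventually.of_forall fun ω => ?_
          have : Real.exp (-(z * X ω)) ≤ 1 :=
            Real.exp_le_one_iff.mpr (neg_nonpos.mpr (mul_nonneg hz0.le (hXpos ω)))
          simp only [Pi.zero_apply]
          linarith
        have e3 : (1 - Real.exp (-(z * ε))) * p
            ≤ ∫ ω in {ω | ε ≤ X ω}, (1 - Real.exp (-(z * X ω))) ∂μ := by
          have emono : ∫ ω in {ω | ε ≤ X ω}, (1 - Real.exp (-(z * ε))) ∂μ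
              ≤ ∫ ω in {ω | ε ≤ X ω}, (1 - Real.exp (-(z * X ω))) ∂μ := by
            refine setIntegral_mono_on (integrableOn_const (hs := measure_ne_top μ _))
              hI1.integrableOn hAs ?_
            intro ω hω
            have hωε : ε ≤ X ω := hω
            have : Real.exp (-(z * X ω)) ≤ Real.exp (-(z * ε)) := by
              apply Real.exp_le_exp.mpr
              nlinarith
            linarith
          calc (1 - Real.exp (-(z * ε))) * p
              = ∫ _ω in {ω | ε ≤ X ω}, (1 - Real.exp (-(z * ε))) ∂μ := by
                rw [setIntegral_const, smul_eq_mul, hp, measureReal_def]; ring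
            _ ≤ _ := emono
        have e4 : (1:ℝ)/2 ≤ 1 - Real.exp (-(z * ε)) := by
          have h1 : 1 < z * ε := by
            calc (1:ℝ) = (1/ε) * ε := by field_simp
              _ < z * ε := mul_lt_mul_of_pos_right hzz hε
          have h2 : Real.exp (-(z * ε)) < Real.exp (-1) := by
            apply Real.exp_lt_exp.mpr; linarith
          have h4 : (2:ℝ) ≤ Real.exp 1 := by nlinarith [Real.exp_one_gt_d9]
          have h3 : Real.exp (-1) ≤ 1/2 := by
            rw [Real.exp_neg]
            have := inv_anti₀ (by norm_num : (0:ℝ) < 2) h4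
            simpa [one_div] using this
          linarith
        nlinarith [hpε]
      have htail : ∀ z ∈ Set.Ioi z₀, G z ≤ (2/p) * F z := by
        intro z hz
        have hz0 : 0 < z := lt_trans hz₀pos hz
        have h1z : (0:ℝ) ≤ 1/z := by positivity
        have hLY0 := hLYnn z
        have h1 : G z ≤ (1/z) * LY z := by
          have he : Real.exp (-(z * EX)) ≤ 1 :=
            Real.exp_le_one_iff.mpr (neg_nonpos.mpr (mul_nonneg hz0.le hEXnn))
          have hGz : G z = (1/z) * (1 - Real.exp (-(z * EX))) * LY z := by rw [hG]
          rw [hGz]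
          nlinarith [mul_nonneg (mul_nonneg h1z (Real.exp_pos (-(z*EX))).le) hLY0]
        have h2 : (1/z) * ((p/2) * LY z) ≤ (1/z) * ((1 - LX z) * LY z) := by
          have hk := hkey z hz
          nlinarith [mul_nonneg (mul_nonneg h1z (by linarith : (0:ℝ) ≤ 1 - LX z - p/2)) hLY0]
        have hFz : F z = (1/z) * ((1 - LX z) * LY z) := by rw [hF]; ring
        have h3 : (1/z) * LY z ≤ (2/p) * F z := by
          rw [hFz]
          calc (1/z) * LY z = (2/p) * ((1/z) * ((p/2) * LY z)) := by
                field_simp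
            _ ≤ (2/p) * ((1/z) * ((1 - LX z) * LY z)) :=
                mul_le_mul_of_nonneg_left h2 (by positivity)
        linarith
      have hsplit : (∫⁻ z in Set.Ioi (0:ℝ), ENNReal.ofReal (G z))
          = (∫⁻ z in Set.Ioc 0 z₀, ENNReal.ofReal (G z))
            + ∫⁻ z in Set.Ioi z₀, ENNReal.ofReal (G z) := by
        rw [← Set.Ioc_union_Ioi_eq_Ioi hz₀pos.le]
        exact lintegral_union measurableSet_Ioi (Set.Ioc_disjoint_Ioi le_rfl)
      have hb1 : (∫⁻ z in Set.Ioc 0 z₀, ENNReal.ofReal (G z))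
          ≤ ENNReal.ofReal EX * ENNReal.ofReal z₀ := by
        calc (∫⁻ z in Set.Ioc 0 z₀, ENNReal.ofReal (G z))
            ≤ ∫⁻ _z in Set.Ioc 0 z₀, ENNReal.ofReal EX := by
              refine lintegral_mono_ae ?_
              filter_upwards [ae_restrict_mem measurableSet_Ioc] with z hzz
              refine ENNReal.ofReal_le_ofReal ?_
              have hz0 : 0 < z := hzz.1
              have hu := Real.add_one_le_exp (-(z * EX))
              have hLY1 := hLYle z hz0.le
              have hLY0 := hLYnn z
              have h1z : (0:ℝ) < 1/z := by positivity
              have hee : Real.exp (-(z*EX)) ≤ 1 :=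
                Real.exp_le_one_iff.mpr (neg_nonpos.mpr (mul_nonneg hz0.le hEXnn))
              have hG1 : G z ≤ (1/z) * (1 - Real.exp (-(z*EX))) := by
                have hnn : 0 ≤ (1/z) * (1 - Real.exp (-(z*EX))) := by nlinarith
                calc G z = ((1/z) * (1 - Real.exp (-(z*EX)))) * LY z := by rw [hG]
                  _ ≤ ((1/z) * (1 - Real.exp (-(z*EX)))) * 1 := mul_le_mul_of_nonneg_left hLY1 hnn
                  _ = (1/z) * (1 - Real.exp (-(z*EX))) := mul_one _
              have h5 : (1/z) * (1 - Real.exp (-(z*EX))) ≤ (1/z) * (z * EX) :=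
                mul_le_mul_of_nonneg_left (by linarith) h1z.le
              have hzEX : (1/z) * (z*EX) = EX := by field_simp
              linarith
          _ = ENNReal.ofReal EX * volume (Set.Ioc (0:ℝ) z₀) := setLIntegral_const _ _
          _ ≤ ENNReal.ofReal EX * ENNReal.ofReal z₀ := by
              rw [Real.volume_Ioc]
              simp
      have hb2 : (∫⁻ z in Set.Ioi z₀, ENNReal.ofReal (G z)) ≤ ENNReal.ofReal (2/p) * A := by
        calc (∫⁻ z in Set.Ioi z₀, ENNReal.ofReal (G z))
            ≤ ∫⁻ z in Set.Ioi z₀, ENNReal.ofReal (2/p) * ENNReal.ofReal (F z) := by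
              refine lintegral_mono_ae ?_
              filter_upwards [ae_restrict_mem measurableSet_Ioi] with z hzz
              rw [← ENNReal.ofReal_mul (by positivity)]
              exact ENNReal.ofReal_le_ofReal (htail z hzz)
          _ = ENNReal.ofReal (2/p) * ∫⁻ z in Set.Ioi z₀, ENNReal.ofReal (F z) :=
              lintegral_const_mul' _ _ ENNReal.ofReal_ne_top
          _ ≤ ENNReal.ofReal (2/p) * ∫⁻ z in Set.Ioi 0, ENNReal.ofReal (F z) :=
              mul_le_mul_right (lintegral_mono_set (Set.Ioi_subset_Ioi hz₀pos.le)) _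
          _ = ENNReal.ofReal (2/p) * A := by rw [← hB]
      rw [hsplit]
      refine ne_of_lt (lt_of_le_of_lt (add_le_add hb1 hb2) ?_)
      refine ENNReal.add_lt_top.mpr ⟨?_, ?_⟩
      · exact ENNReal.mul_lt_top ENNReal.ofReal_lt_top ENNReal.ofReal_lt_top
      · exact ENNReal.mul_lt_top ENNReal.ofReal_lt_top hA_top.lt_top
    calc (∫ ω, Real.log (1 + X ω / Y ω) ∂μ) = A.toReal := hLHS
      _ ≤ (∫⁻ z in Set.Ioi (0:ℝ), ENNReal.ofReal (G z)).toReal :=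
          ENNReal.toReal_mono hC_top (hB ▸ hBC)
      _ = ∫ z in Set.Ioi (0:ℝ), G z := hRHS.symm
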